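/- Let y_n be a nonnegative sequence satisfying y_{n+1} ≤ c·b^n·y_n^{1+δ} with c, δ > 0 and b > 1. If y_0 ≤ c^{−1/δ}·b^{−1/δ²}, then y_n ≤ y_0·b^{−n/δ} for all n, and consequently y_n → 0 as n → ∞. -/

import Mathlib

open Real Filter

/-- Ladyzhenskaya–Ural'tseva iteration lemma, convergence form. -/
theorem stmt1 (y : ℕ → ℝ) (c δ b : ℝ) (hc : 0 < c) (hδ : 0 < δ) (hb : 1 < b)
    (hy : ∀ n, 0 ≤ y n)
    (hrec : ∀ n, y (n + 1) ≤ c * b ^ n * y n ^ (1 + δ))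
    (h0 : y 0 ≤ c ^ (-(1 / δ)) * b ^ (-(1 / δ ^ 2))) :
    (∀ n : ℕ, y n ≤ y 0 * b ^ (-(n : ℝ) / δ)) ∧
      Tendsto y atTop (nhds 0) := by
  have hb0 : (0 : ℝ) < b := lt_trans one_pos hb
  have hkey : c * y 0 ^ δ ≤ b ^ (-(1 / δ)) := by
    have h1 : y 0 ^ δ ≤ (c ^ (-(1 / δ)) * b ^ (-(1 / δ ^ 2))) ^ δ :=
      Real.rpow_le_rpow (hy 0) h0 hδ.le
    have h2 : (c ^ (-(1 / δ)) * b ^ (-(1 / δ ^ 2))) ^ δ = c⁻¹ * b ^ (-(1 / δ)) := by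
      rw [Real.mul_rpow (by positivity) (by positivity), ← Real.rpow_natCast,
        ← Real.rpow_mul hc.le, ← Real.rpow_mul hb0.le]
      norm_num
      rw [show (δ:ℝ)⁻¹ * δ = 1 by field_simp, show ((δ:ℝ) ^ 2)⁻¹ * δ = δ⁻¹ by
        field_simp]
      rw [Real.rpow_neg_one]
    rw [h2] at h1
    calc c * y 0 ^ δ ≤ c * (c⁻¹ * b ^ (-(1 / δ))) := by
          exact mul_le_mul_of_nonneg_left h1 hc.le
      _ = b ^ (-(1 / δ)) := by field_simp
  have main : ∀ n : ℕ, y n ≤ y 0 * b ^ (-(n : ℝ) / δ) := by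
    intro n
    induction n with
    | zero => simp
    | succ n ih =>
      have hbn : (0:ℝ) ≤ y 0 * b ^ (-(n : ℝ) / δ) := mul_nonneg (hy 0) (by positivity)
      calc y (n + 1) ≤ c * b ^ n * y n ^ (1 + δ) := hrec n
        _ ≤ c * b ^ n * (y 0 * b ^ (-(n : ℝ) / δ)) ^ (1 + δ) := by
            have := Real.rpow_le_rpow (hy n) ih (by linarith : (0:ℝ) ≤ 1 + δ)
            exact mul_le_mul_of_nonneg_left this (by positivity)
        _ = (c * y 0 ^ δ) * (y 0 * b ^ (-(n : ℝ) / δ)) := by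
            have hbne : b ^ ((n:ℝ)) ≠ 0 := (Real.rpow_pos_of_pos hb0 _).ne'
            rw [Real.mul_rpow (hy 0) (by positivity),
              Real.rpow_add' (hy 0) (ne_of_gt (by linarith : (0:ℝ) < 1 + δ)),
              ← Real.rpow_mul hb0.le, ← Real.rpow_natCast b n,
              Real.rpow_one]
            rw [show -(n : ℝ) / δ * (1 + δ) = -(n : ℝ) / δ + (-(n:ℝ)) by field_simp; ring]
            rw [Real.rpow_add hb0, Real.rpow_neg hb0.le (n:ℝ)]
            field_simp
        _ ≤ b ^ (-(1 / δ)) * (y 0 * b ^ (-(n : ℝ) / δ)) :=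
            mul_le_mul_of_nonneg_right hkey hbn
        _ = y 0 * b ^ (-((n : ℕ) + 1 : ℝ) / δ) := by
            rw [show (-((n : ℕ) + 1 : ℝ)) / δ = -(1 / δ) + (-(n:ℝ)/δ) by ring,
              Real.rpow_add hb0]
            ring
        _ = y 0 * b ^ (-((n + 1 : ℕ) : ℝ) / δ) := by push_cast; ring_nf
  refine ⟨main, ?_⟩
  have hq : b ^ (-(1 / δ)) < 1 :=
    Real.rpow_lt_one_of_one_lt_of_neg hb (neg_lt_zero.mpr (by positivity))
  have hq0 : (0:ℝ) ≤ b ^ (-(1 / δ)) := by positivity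
  have htend : Tendsto (fun n : ℕ => y 0 * b ^ (-(n : ℝ) / δ)) atTop (nhds 0) := by
    have heq : ∀ n : ℕ, y 0 * b ^ (-(n : ℝ) / δ) = y 0 * (b ^ (-(1 / δ))) ^ n := by
      intro n
      rw [← Real.rpow_natCast (b ^ (-(1 / δ))) n, ← Real.rpow_mul hb0.le]
      congr 1
      field_simp
    simp only [heq]
    simpa using (tendsto_pow_atTop_nhds_zero_of_lt_one hq0 hq).const_mul (y 0)
  exact squeeze_zero hy main htend
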